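/- Let h ∈ C²(I) on a compact interval I with |h'(x)| ≥ δ₁ > 0 for all x ∈ I and |h''(x)| ≥ δ₂ > 0 for all x ∈ I. For τ > 0 let E(τ) := {x ∈ I : |h(x)| < τ}. Then there is an absolute constant K such that the Lebesgue measure of E(τ) satisfies |E(τ)| ≤ K · min(τ/δ₁, √(τ/δ₂)). -/

import Mathlib

open Set Real MeasureTheory

/-- If `g' ≤ f'` pointwise on `[a,b]`, then `g b - g a ≤ f b - f a`. -/
lemma aux_sub_lower {a b : ℝ} (hab : a ≤ b) {f f' g g' : ℝ → ℝ}
    (hf : ∀ x ∈ Icc a b, HasDerivWithinAt f (f' x) (Icc a b) x)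
    (hg : ∀ x ∈ Icc a b, HasDerivWithinAt g (g' x) (Icc a b) x)
    (hle : ∀ x ∈ Icc a b, g' x ≤ f' x) :
    g b - g a ≤ f b - f a := by
  have hmono : MonotoneOn (fun x => f x - g x) (Icc a b) := by
    apply monotoneOn_of_hasDerivWithinAt_nonneg (f' := fun x => f' x - g' x) (convex_Icc a b)
    · exact fun x hx => ((hf x hx).continuousWithinAt).sub ((hg x hx).continuousWithinAt)
    · intro x hx
      exact ((hf x (interior_subset hx)).sub (hg x (interior_subset hx))).mono interior_subset
    · intro x hx
      have := hle x (interior_subset hx)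
      linarith
  have h2 := hmono ⟨le_refl a, hab⟩ ⟨hab, le_refl b⟩ hab
  dsimp only at h2
  linarith

lemma aux_core {ξ η : ℝ} {h h' h'' : ℝ → ℝ} {δ₁ δ₂ : ℝ}
    (hd1 : ∀ x ∈ Icc ξ η, HasDerivWithinAt h (h' x) (Icc ξ η) x)
    (hd2 : ∀ x ∈ Icc ξ η, HasDerivWithinAt h' (h'' x) (Icc ξ η) x)
    (h1 : ∀ x ∈ Icc ξ η, δ₁ ≤ h' x)
    (h2 : (∀ x ∈ Icc ξ η, δ₂ ≤ h'' x) ∨ (∀ x ∈ Icc ξ η, h'' x ≤ -δ₂))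
    {a b : ℝ} (ha : a ∈ Icc ξ η) (hb : b ∈ Icc ξ η) (hab : a ≤ b) :
    δ₁ * (b - a) + δ₂ * (b - a) ^ 2 / 2 ≤ h b - h a := by
  have hsub : Icc a b ⊆ Icc ξ η := Icc_subset_Icc ha.1 hb.2
  have hgmul : ∀ y : ℝ, HasDerivAt (fun y => δ₂ * y) δ₂ y := fun y => by
    simpa using (hasDerivAt_id y).const_mul δ₂
  rcases h2 with h2 | h2
  · have hstep : ∀ x ∈ Icc a b, δ₁ + δ₂ * (x - a) ≤ h' x := by
      intro x hx
      have hsub2 : Icc a x ⊆ Icc ξ η := Icc_subset_Icc ha.1 (hsub hx).2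
      have key := aux_sub_lower hx.1 (f := h') (f' := h'') (g := fun y => δ₂ * y)
        (g' := fun _ => δ₂)
        (fun y hy => (hd2 y (hsub2 hy)).mono hsub2)
        (fun y _ => (hgmul y).hasDerivWithinAt)
        (fun y hy => h2 y (hsub2 hy))
      have h1a := h1 a ha
      linarith
    have hg2 : ∀ y : ℝ, HasDerivAt (fun y => δ₁ * y + δ₂ * (y - a) ^ 2 / 2)
        (δ₁ + δ₂ * (y - a)) y := by
      intro y
      have hy1 : HasDerivAt (fun y : ℝ => y - a) 1 y := (hasDerivAt_id y).sub_const a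
      have := ((hasDerivAt_id y).const_mul δ₁).add (((hy1.pow 2).const_mul δ₂).div_const 2)
      exact this.congr_deriv (by ring)
    have key := aux_sub_lower hab (f := h) (f' := h')
      (g := fun y => δ₁ * y + δ₂ * (y - a) ^ 2 / 2) (g' := fun y => δ₁ + δ₂ * (y - a))
      (fun y hy => (hd1 y (hsub hy)).mono hsub)
      (fun y _ => (hg2 y).hasDerivWithinAt)
      hstep
    refine le_trans (le_of_eq ?_) key
    ring
  · have hstep : ∀ x ∈ Icc a b, δ₁ + δ₂ * (b - x) ≤ h' x := by
      intro x hx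
      have hsub2 : Icc x b ⊆ Icc ξ η := Icc_subset_Icc (hsub hx).1 hb.2
      have key := aux_sub_lower hx.2 (f := fun y => -h' y) (f' := fun y => -h'' y)
        (g := fun y => δ₂ * y) (g' := fun _ => δ₂)
        (fun y hy => ((hd2 y (hsub2 hy)).mono hsub2).neg)
        (fun y _ => (hgmul y).hasDerivWithinAt)
        (fun y hy => by have := h2 y (hsub2 hy); linarith)
      have h1b := h1 b hb
      linarith
    have hg2 : ∀ y : ℝ, HasDerivAt (fun y => δ₁ * y - δ₂ * (b - y) ^ 2 / 2)
        (δ₁ + δ₂ * (b - y)) y := by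
      intro y
      have hy1 : HasDerivAt (fun y : ℝ => b - y) (-1) y := (hasDerivAt_id y).const_sub b
      have := ((hasDerivAt_id y).const_mul δ₁).sub (((hy1.pow 2).const_mul δ₂).div_const 2)
      exact this.congr_deriv (by ring)
    have key := aux_sub_lower hab (f := h) (f' := h')
      (g := fun y => δ₁ * y - δ₂ * (b - y) ^ 2 / 2) (g' := fun y => δ₁ + δ₂ * (b - y))
      (fun y hy => (hd1 y (hsub hy)).mono hsub)
      (fun y _ => (hg2 y).hasDerivWithinAt)
      hstep
    refine le_trans (le_of_eq ?_) key
    ring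

/-- A continuous function whose absolute value is bounded below by `δ > 0` on an
interval has constant sign there. -/
lemma aux_sign {ξ η δ : ℝ} {f : ℝ → ℝ} (hc : ContinuousOn f (Icc ξ η)) (hδ : 0 < δ)
    (hf : ∀ x ∈ Icc ξ η, δ ≤ |f x|) :
    (∀ x ∈ Icc ξ η, δ ≤ f x) ∨ (∀ x ∈ Icc ξ η, f x ≤ -δ) := by
  by_contra hcon
  push_neg at hcon
  obtain ⟨⟨x, hx, hx'⟩, ⟨y, hy, hy'⟩⟩ := hcon
  have hfx : f x ≤ -δ := by
    rcases le_abs.mp (hf x hx) with hh | hh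
    · linarith
    · linarith
  have hfy : δ ≤ f y := by
    rcases le_abs.mp (hf y hy) with hh | hh
    · exact hh
    · linarith
  have h0 : (0 : ℝ) ∈ Icc (f x) (f y) := ⟨by linarith, by linarith⟩
  obtain ⟨z, hz, hz0⟩ := isPreconnected_Icc.intermediate_value hx hy hc h0
  have := hf z hz
  rw [hz0] at this
  simp at this
  linarith

lemma aux_key {ξ η : ℝ} {h h' h'' : ℝ → ℝ} {δ₁ δ₂ : ℝ}
    (hd1 : ∀ x ∈ Icc ξ η, HasDerivWithinAt h (h' x) (Icc ξ η) x)
    (hd2 : ∀ x ∈ Icc ξ η, HasDerivWithinAt h' (h'' x) (Icc ξ η) x)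
    (h1 : (∀ x ∈ Icc ξ η, δ₁ ≤ h' x) ∨ (∀ x ∈ Icc ξ η, h' x ≤ -δ₁))
    (h2 : (∀ x ∈ Icc ξ η, δ₂ ≤ h'' x) ∨ (∀ x ∈ Icc ξ η, h'' x ≤ -δ₂))
    {a b : ℝ} (ha : a ∈ Icc ξ η) (hb : b ∈ Icc ξ η) (hab : a ≤ b) :
    δ₁ * (b - a) + δ₂ * (b - a) ^ 2 / 2 ≤ |h b - h a| := by
  rcases h1 with h1 | h1
  · exact le_trans (aux_core hd1 hd2 h1 h2 ha hb hab) (le_abs_self _)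
  · have h2' : (∀ x ∈ Icc ξ η, δ₂ ≤ -h'' x) ∨ (∀ x ∈ Icc ξ η, -h'' x ≤ -δ₂) := by
      rcases h2 with h2 | h2
      · exact Or.inr fun x hx => by have := h2 x hx; linarith
      · exact Or.inl fun x hx => by have := h2 x hx; linarith
    have key := aux_core (h := fun y => -h y) (h' := fun y => -h' y) (h'' := fun y => -h'' y)
      (fun x hx => (hd1 x hx).neg) (fun x hx => (hd2 x hx).neg)
      (fun x hx => by have := h1 x hx; linarith) h2' ha hb hab
    calc δ₁ * (b - a) + δ₂ * (b - a) ^ 2 / 2 ≤ -(h b - h a) := by linarith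
      _ ≤ |h b - h a| := neg_le_abs _

theorem measure_sublevel_bound :
    ∃ K : ℝ, 0 < K ∧
      ∀ (ξ η : ℝ) (h h' h'' : ℝ → ℝ) (δ₁ δ₂ : ℝ),
        (∀ x ∈ Icc ξ η, HasDerivWithinAt h (h' x) (Icc ξ η) x) →
        (∀ x ∈ Icc ξ η, HasDerivWithinAt h' (h'' x) (Icc ξ η) x) →
        ContinuousOn h'' (Icc ξ η) →
        0 < δ₁ → (∀ x ∈ Icc ξ η, δ₁ ≤ |h' x|) →
        0 < δ₂ → (∀ x ∈ Icc ξ η, δ₂ ≤ |h'' x|) →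
        ∀ τ : ℝ, 0 < τ →
          (volume {x ∈ Icc ξ η | |h x| < τ}).toReal
            ≤ K * min (τ / δ₁) (Real.sqrt (τ / δ₂)) := by
  refine ⟨4, by norm_num, ?_⟩
  intro ξ η h h' h'' δ₁ δ₂ hd1 hd2 hc2 hδ₁ hb1 hδ₂ hb2 τ hτ
  set M := min (τ / δ₁) (Real.sqrt (τ / δ₂)) with hM
  have hM0 : 0 ≤ M := le_min (le_of_lt (div_pos hτ hδ₁)) (Real.sqrt_nonneg _)
  set E := {x ∈ Icc ξ η | |h x| < τ} with hE
  rcases eq_empty_or_nonempty E with hEe | ⟨a, haE⟩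
  · rw [hEe]
    simp only [measure_empty, ENNReal.toReal_zero]
    exact mul_nonneg (by norm_num) hM0
  · have hc1 : ContinuousOn h' (Icc ξ η) := fun x hx => (hd2 x hx).continuousWithinAt
    have hs1 := aux_sign hc1 hδ₁ hb1
    have hs2 := aux_sign hc2 hδ₂ hb2
    have hdist : ∀ p ∈ E, ∀ q ∈ E, p ≤ q → q - p ≤ 2 * M := by
      intro p hp q hq hpq
      obtain ⟨hpI, hpτ⟩ := hp
      obtain ⟨hqI, hqτ⟩ := hq
      have key := aux_key hd1 hd2 hs1 hs2 hpI hqI hpq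
      have habs : |h q - h p| < 2 * τ := by
        calc |h q - h p| ≤ |h q| + |h p| := abs_sub _ _
          _ < 2 * τ := by linarith
      have hqp0 : 0 ≤ q - p := by linarith
      have hsq : 0 ≤ δ₂ * (q - p) ^ 2 / 2 := by positivity
      have hlin : 0 ≤ δ₁ * (q - p) := mul_nonneg hδ₁.le hqp0
      have b1 : q - p ≤ 2 * (τ / δ₁) := by
        rw [show 2 * (τ / δ₁) = 2 * τ / δ₁ by ring, le_div_iff₀ hδ₁]
        nlinarith
      have b2 : q - p ≤ 2 * Real.sqrt (τ / δ₂) := by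
        have hsqle : (q - p) ^ 2 ≤ 4 * (τ / δ₂) := by
          rw [show 4 * (τ / δ₂) = 4 * τ / δ₂ by ring, le_div_iff₀ hδ₂]
          nlinarith
        calc q - p = Real.sqrt ((q - p) ^ 2) := (Real.sqrt_sq hqp0).symm
          _ ≤ Real.sqrt (4 * (τ / δ₂)) := Real.sqrt_le_sqrt hsqle
          _ = 2 * Real.sqrt (τ / δ₂) := by
              rw [show (4 : ℝ) * (τ / δ₂) = 2 ^ 2 * (τ / δ₂) by norm_num,
                Real.sqrt_mul (by positivity), Real.sqrt_sq (by norm_num)]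
      rcases le_total (τ / δ₁) (Real.sqrt (τ / δ₂)) with hmin | hmin
      · rw [hM, min_eq_left hmin]; exact b1
      · rw [hM, min_eq_right hmin]; exact b2
    have hEsub : E ⊆ Icc (a - 2 * M) (a + 2 * M) := by
      intro b hbE
      rcases le_total a b with hab | hab
      · have := hdist a haE b hbE hab
        exact ⟨by linarith, by linarith⟩
      · have := hdist b hbE a haE hab
        exact ⟨by linarith, by linarith⟩
    have hvol : volume E ≤ ENNReal.ofReal (4 * M) := by
      calc volume E ≤ volume (Icc (a - 2 * M) (a + 2 * M)) := measure_mono hEsub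
        _ = ENNReal.ofReal ((a + 2 * M) - (a - 2 * M)) := Real.volume_Icc
        _ = ENNReal.ofReal (4 * M) := by congr 1; ring
    exact ENNReal.toReal_le_of_le_ofReal (mul_nonneg (by norm_num) hM0) hvol
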